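/- Let K, W ≥ 1, A : Fin K → Fin W → ℝ and B : Fin W → Fin K → ℝ, and define s(β) = (1/2) * ((1/K) * ∑_{k=1}^K RSM_β(A k) + (1/W) * ∑_{w=1}^W RSM_β(B w)) for β > 0. Then s(β) − (β/2) * (log K + log W) tends to (1/2) * ((1/(K*W)) * ∑_{k=1}^K ∑_{w=1}^W A k w + (1/(K*W)) * ∑_{w=1}^W ∑_{k=1}^K B w k) as β tends to +∞. -/

import Mathlib

open Filter Real

lemma rsm_aux (N : ℕ) (hN : 1 ≤ N) (x : Fin N → ℝ) :
    Tendsto (fun β : ℝ => β * Real.log (∑ l, Real.exp (x l / β)) - β * Real.log N)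
      atTop (nhds ((∑ l, x l) / N)) := by
  have hNpos : (0 : ℝ) < N := by positivity
  set F : ℝ → ℝ := fun t => Real.log (∑ l, Real.exp (t * x l)) with hF
  have hg : HasDerivAt (fun t : ℝ => ∑ l, Real.exp (t * x l))
      (∑ l, Real.exp (0 * x l) * x l) 0 := by
    apply HasDerivAt.fun_sum
    intro l _
    exact (hasDerivAt_mul_const (x l)).exp
  have hg0 : (∑ l : Fin N, Real.exp (0 * x l)) = N := by simp
  have hF0 : F 0 = Real.log N := by simp [hF]
  have hderiv : HasDerivAt F ((∑ l, x l) / N) 0 := by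
    have := hg.log (by rw [hg0]; positivity)
    simpa [hg0] using this
  have hslope : Tendsto (slope F 0) (nhdsWithin 0 {(0:ℝ)}ᶜ) (nhds ((∑ l, x l) / N)) :=
    hasDerivAt_iff_tendsto_slope.mp hderiv
  have hinv : Tendsto (fun β : ℝ => β⁻¹) atTop (nhdsWithin 0 {(0:ℝ)}ᶜ) := by
    have h1 : Tendsto (fun β : ℝ => β⁻¹) atTop (nhdsWithin 0 (Set.Ioi 0)) :=
      tendsto_inv_atTop_nhdsGT_zero
    exact h1.mono_right (nhdsWithin_mono _ (fun y hy => ne_of_gt hy))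
  have hcomp := hslope.comp hinv
  apply hcomp.congr'
  filter_upwards [eventually_gt_atTop (0:ℝ)] with β hβ
  have hβ' : β ≠ 0 := ne_of_gt hβ
  simp only [Function.comp, slope, hF0, hF, vsub_eq_sub, sub_zero]
  have : ∀ l : Fin N, β⁻¹ * x l = x l / β := fun l => by field_simp
  simp only [this]
  field_simp
  have h2 : ∀ l : Fin N, x l * β⁻¹ = β⁻¹ * x l := fun l => mul_comm _ _
  simp [h2]

/-- The bidirectional RealSoftMax similarity
`s(β) = (1/2) * ((1/K) * ∑ k, RSM_β(A k) + (1/W) * ∑ w, RSM_β(B w))`, shifted by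
`(β/2) * (log K + log W)`, tends as `β → +∞` to
`(1/2) * ((1/(K*W)) * ∑ k ∑ w, A k w + (1/(K*W)) * ∑ w ∑ k, B w k)`. -/
theorem bidirectional_rsm_tendsto_mean (K W : ℕ) (hK : 1 ≤ K) (hW : 1 ≤ W)
    (A : Fin K → Fin W → ℝ) (B : Fin W → Fin K → ℝ) :
    Filter.Tendsto
      (fun β : ℝ =>
        (1 / 2 : ℝ) *
            ((1 / (K : ℝ)) * ∑ k, β * Real.log (∑ w, Real.exp (A k w / β)) +
             (1 / (W : ℝ)) * ∑ w, β * Real.log (∑ k, Real.exp (B w k / β))) -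
          (β / 2) * (Real.log K + Real.log W))
      Filter.atTop
      (nhds ((1 / 2 : ℝ) *
        ((1 / ((K : ℝ) * (W : ℝ))) * ∑ k, ∑ w, A k w +
         (1 / ((K : ℝ) * (W : ℝ))) * ∑ w, ∑ k, B w k))) := by
  have hK0 : (K : ℝ) ≠ 0 := by positivity
  have hW0 : (W : ℝ) ≠ 0 := by positivity
  have hA : Tendsto (fun β : ℝ => ∑ k, (β * Real.log (∑ w, Real.exp (A k w / β)) - β * Real.log W))
      atTop (nhds (∑ k, (∑ w, A k w) / W)) :=
    tendsto_finset_sum _ (fun k _ => rsm_aux W hW (A k))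
  have hB : Tendsto (fun β : ℝ => ∑ w, (β * Real.log (∑ k, Real.exp (B w k / β)) - β * Real.log K))
      atTop (nhds (∑ w, (∑ k, B w k) / K)) :=
    tendsto_finset_sum _ (fun w _ => rsm_aux K hK (B w))
  have hmain := ((hA.const_mul ((1:ℝ)/K)).add (hB.const_mul ((1:ℝ)/W))).const_mul ((1:ℝ)/2)
  have hval : (1 / 2 : ℝ) *
        ((1 / ((K : ℝ) * (W : ℝ))) * ∑ k, ∑ w, A k w +
         (1 / ((K : ℝ) * (W : ℝ))) * ∑ w, ∑ k, B w k) =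
      (1/2 : ℝ) * ((1/(K:ℝ)) * (∑ k, (∑ w, A k w) / W) + (1/(W:ℝ)) * (∑ w, (∑ k, B w k) / K)) := by
    rw [← Finset.sum_div, ← Finset.sum_div]
    field_simp
  rw [hval]
  apply hmain.congr
  intro β
  simp only [Finset.sum_sub_distrib, Finset.sum_const, Finset.card_univ, Fintype.card_fin,
    nsmul_eq_mul]
  field_simp
  ring
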